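/- arXiv:1802.07092 — 2 statements merged into one kernel-verified Lean document; each statement's English description precedes it below -/
import Mathlib

section
/- Let Ω ⊆ ℝ be open and let k : Ω × Ω → ℂ be a positive definite kernel of class S₁(U) on some open set U ⊆ ℝ² with D(Ω²) ⊆ U ⊆ Ω × Ω. Then the second-order mixed partial derivatives ∂²k/∂v∂u (u,v) and ∂²k/∂u∂v (u,v) exist in ℂ for all (u,v) ∈ Ω × Ω. -/
open Filter Topology ComplexOrder

/-- Partial derivative in the first variable. -/
noncomputable def pderiv1 (k : ℝ × ℝ → ℂ) : ℝ × ℝ → ℂ :=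
  fun p => deriv (fun u => k (u, p.2)) p.1

/-- Partial derivative in the second variable. -/
noncomputable def pderiv2 (k : ℝ × ℝ → ℂ) : ℝ × ℝ → ℂ :=
  fun p => deriv (fun v => k (p.1, v)) p.2

/-- `k` is of class `S_n(U)`. -/
def IsClassSn (n : ℕ) (U : Set (ℝ × ℝ)) (k : ℝ × ℝ → ℂ) : Prop :=
  (∀ m₁ < n, ∀ p ∈ U, DifferentiableAt ℝ (fun u => (pderiv1^[m₁] k) (u, p.2)) p.1) ∧
  (∀ m₁ ≤ n, ∀ m₂ < n, ∀ p ∈ U,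
    DifferentiableAt ℝ (fun v => (pderiv2^[m₂] (pderiv1^[m₁] k)) (p.1, v)) p.2) ∧
  (∀ m₁ ≤ n, ∀ m₂ ≤ n, ContinuousOn (pderiv2^[m₂] (pderiv1^[m₁] k)) U)

/-! ### Auxiliary machinery -/

noncomputable def Bfm (k : ℝ × ℝ → ℂ) {n : ℕ} (x : Fin n → ℝ) (a b : Fin n → ℂ) : ℂ :=
  ∑ i, ∑ j, k (x i, x j) * a i * (starRingEnd ℂ) (b j)

lemma Bfm_add_left (k : ℝ × ℝ → ℂ) {n : ℕ} (x : Fin n → ℝ) (a a' b : Fin n → ℂ) :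
    Bfm k x (a + a') b = Bfm k x a b + Bfm k x a' b := by
  simp [Bfm, mul_add, add_mul, Finset.sum_add_distrib]

lemma Bfm_smul_left (k : ℝ × ℝ → ℂ) {n : ℕ} (x : Fin n → ℝ) (t : ℂ) (a b : Fin n → ℂ) :
    Bfm k x (t • a) b = t * Bfm k x a b := by
  simp [Bfm, Finset.mul_sum]; ring_nf
  refine Finset.sum_congr rfl fun i _ => Finset.sum_congr rfl fun j _ => by ring

lemma Bfm_add_right (k : ℝ × ℝ → ℂ) {n : ℕ} (x : Fin n → ℝ) (a b b' : Fin n → ℂ) :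
    Bfm k x a (b + b') = Bfm k x a b + Bfm k x a b' := by
  simp [Bfm, mul_add, add_mul, Finset.sum_add_distrib]

lemma Bfm_smul_right (k : ℝ × ℝ → ℂ) {n : ℕ} (x : Fin n → ℝ) (t : ℂ) (a b : Fin n → ℂ) :
    Bfm k x a (t • b) = (starRingEnd ℂ) t * Bfm k x a b := by
  simp [Bfm, Finset.mul_sum]
  refine Finset.sum_congr rfl fun i _ => Finset.sum_congr rfl fun j _ => by ring

section CS
variable {Ω : Set ℝ} {k : ℝ × ℝ → ℂ}
variable (hpd : ∀ (n : ℕ) (x : Fin n → ℝ), (∀ i, x i ∈ Ω) → ∀ ξ : Fin n → ℂ,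
      0 ≤ ∑ i, ∑ j, k (x i, x j) * ξ i * (starRingEnd ℂ) (ξ j))

include hpd

lemma Bfm_self_nonneg {n : ℕ} (x : Fin n → ℝ) (hx : ∀ i, x i ∈ Ω) (c : Fin n → ℂ) :
    0 ≤ (Bfm k x c c).re ∧ (Bfm k x c c).im = 0 := by
  have h : (0:ℂ) ≤ Bfm k x c c := hpd n x hx c
  rw [Complex.le_def] at h
  exact ⟨by simpa using h.1, by simpa using h.2.symm⟩

lemma Bfm_herm {n : ℕ} (x : Fin n → ℝ) (hx : ∀ i, x i ∈ Ω) (a b : Fin n → ℂ) :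
    Bfm k x b a = (starRingEnd ℂ) (Bfm k x a b) := by
  set P := Bfm k x a a with hP
  set Q := Bfm k x b b with hQ
  set S := Bfm k x a b with hS
  set T := Bfm k x b a with hT
  have h1 : (Bfm k x (a + b) (a + b)).im = 0 := (Bfm_self_nonneg hpd x hx _).2
  have h2 : (Bfm k x (a + Complex.I • b) (a + Complex.I • b)).im = 0 :=
    (Bfm_self_nonneg hpd x hx _).2
  have hPim : P.im = 0 := (Bfm_self_nonneg hpd x hx a).2
  have hQim : Q.im = 0 := (Bfm_self_nonneg hpd x hx b).2
  rw [Bfm_add_left, Bfm_add_right, Bfm_add_right] at h1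
  rw [Bfm_add_left, Bfm_add_right, Bfm_add_right, Bfm_smul_left, Bfm_smul_left,
    Bfm_smul_right, Bfm_smul_right] at h2
  simp only [← hP, ← hQ, ← hS, ← hT, Complex.add_im, Complex.mul_im, Complex.mul_re,
    Complex.conj_I, Complex.I_re, Complex.I_im, Complex.neg_re, Complex.neg_im] at h1 h2
  apply Complex.ext <;>
    simp only [Complex.conj_re, Complex.conj_im] <;> nlinarith [h1, h2, hPim, hQim]

lemma Bfm_cs {n : ℕ} (x : Fin n → ℝ) (hx : ∀ i, x i ∈ Ω) (a b : Fin n → ℂ) :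
    ‖Bfm k x a b‖ ^ 2 ≤ (Bfm k x a a).re * (Bfm k x b b).re := by
  have hA := (Bfm_self_nonneg hpd x hx a).1
  have hB := (Bfm_self_nonneg hpd x hx b).1
  have hQim := (Bfm_self_nonneg hpd x hx b).2
  set c := Bfm k x a b with hc
  by_cases hc0 : c = 0
  · simpa [hc0] using mul_nonneg hA hB
  have hcn : (0:ℝ) < ‖c‖ := norm_pos_iff.mpr hc0
  have hc' : ‖c‖ ≠ 0 := hcn.ne'
  have habs : ‖c‖ ≠ 0 := hc'
  have hcc : c * (starRingEnd ℂ) c = ((‖c‖ : ℝ) : ℂ) ^ 2 := by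
    rw [Complex.mul_conj, Complex.normSq_eq_norm_sq]; push_cast; ring
  have key : ∀ s : ℝ, 0 ≤ (Bfm k x a a).re - 2 * s * ‖c‖ + s ^ 2 * (Bfm k x b b).re := by
    intro s
    set r : ℝ := -(s / ‖c‖) with hrdef
    set t : ℂ := (r : ℂ) * c with ht
    have h0 := (Bfm_self_nonneg hpd x hx (a + t • b)).1
    rw [Bfm_add_left, Bfm_add_right, Bfm_add_right, Bfm_smul_left, Bfm_smul_left,
      Bfm_smul_right, Bfm_smul_right, Bfm_herm hpd x hx a b, ← hc] at h0
    have ht1 : (starRingEnd ℂ) t * c = ((r * ‖c‖ ^ 2 : ℝ) : ℂ) := by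
      rw [ht, map_mul, Complex.conj_ofReal]
      push_cast
      linear_combination (r : ℂ) * hcc
    have ht2 : t * (starRingEnd ℂ) c = ((r * ‖c‖ ^ 2 : ℝ) : ℂ) := by
      rw [ht]
      push_cast
      linear_combination (r : ℂ) * hcc
    have ht3 : t * ((starRingEnd ℂ) t * Bfm k x b b)
        = ((r ^ 2 * ‖c‖ ^ 2 : ℝ) : ℂ) * Bfm k x b b := by
      rw [ht, map_mul, Complex.conj_ofReal]
      push_cast
      linear_combination (r : ℂ) ^ 2 * Bfm k x b b * hcc
    rw [ht1, ht2, ht3] at h0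
    simp only [Complex.add_re, Complex.ofReal_re, Complex.re_ofReal_mul] at h0
    have hr1 : r * ‖c‖ ^ 2 = -(s * ‖c‖) := by
      rw [hrdef]; field_simp [habs]
    have hr2 : r ^ 2 * ‖c‖ ^ 2 = s ^ 2 := by
      rw [hrdef]; field_simp [habs]
    rw [hr1, hr2] at h0
    linarith
  by_cases hQ0 : (Bfm k x b b).re = 0
  · exfalso
    have hk := key ((Bfm k x a a).re / (2 * ‖c‖) + 1 / (2 * ‖c‖))
    rw [hQ0] at hk
    have hsimp : 2 * ((Bfm k x a a).re / (2 * ‖c‖) + 1 / (2 * ‖c‖)) * ‖c‖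
        = (Bfm k x a a).re + 1 := by field_simp [habs]
    rw [hsimp] at hk
    nlinarith [hk]
  · have hQpos : 0 < (Bfm k x b b).re := lt_of_le_of_ne hB (Ne.symm hQ0)
    have hk := key (‖c‖ / (Bfm k x b b).re)
    have e1 : 2 * (‖c‖ / (Bfm k x b b).re) * ‖c‖ = 2 * (‖c‖ ^ 2 / (Bfm k x b b).re) := by
      field_simp
    have e2 : (‖c‖ / (Bfm k x b b).re) ^ 2 * (Bfm k x b b).re
        = ‖c‖ ^ 2 / (Bfm k x b b).re := by field_simp
    rw [e1, e2] at hk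
    have h3 : ‖c‖ ^ 2 / (Bfm k x b b).re ≤ (Bfm k x a a).re := by linarith
    have h4 := mul_le_mul_of_nonneg_right h3 hQpos.le
    rwa [div_mul_cancel₀ _ hQ0] at h4

lemma herm_pt {x y : ℝ} (hx : x ∈ Ω) (hy : y ∈ Ω) :
    k (y, x) = (starRingEnd ℂ) (k (x, y)) := by
  have := Bfm_herm hpd ![x, y] (by intro i; fin_cases i <;> assumption)
    ![1, 0] ![0, 1]
  simpa [Bfm, Fin.sum_univ_two] using this

end CS

lemma abs_le_of_mem_uIcc {s a : ℝ} (h : s ∈ Set.uIcc 0 a) : |s| ≤ |a| := by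
  rcases Set.mem_uIcc.mp h with ⟨h1, h2⟩ | ⟨h1, h2⟩
  · rw [abs_of_nonneg h1, abs_of_nonneg (le_trans h1 h2)]; exact h2
  · rw [abs_of_nonpos h2, abs_of_nonpos (le_trans h1 h2)]; linarith

lemma norm_comb4 (a b c d : ℂ) : ‖a - b - c + d‖ ≤ ‖a‖ + ‖b‖ + ‖c‖ + ‖d‖ := by
  calc ‖a - b - c + d‖ ≤ ‖a - b - c‖ + ‖d‖ := norm_add_le _ _
    _ ≤ ‖a - b‖ + ‖c‖ + ‖d‖ := by linarith [norm_sub_le (a - b) c]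
    _ ≤ ‖a‖ + ‖b‖ + ‖c‖ + ‖d‖ := by linarith [norm_sub_le a b]

lemma exists_lim_of_cauchy {f : ℝ → ℂ} {y : ℝ}
    (h : ∀ ε > 0, ∃ δ > 0, ∀ v w : ℝ, v ≠ y → w ≠ y → |v - y| < δ → |w - y| < δ →
      ‖f v - f w‖ ≤ ε) :
    ∃ L, Tendsto f (𝓝[≠] y) (𝓝 L) := by
  have hc : Cauchy (Filter.map f (𝓝[≠] y)) := by
    rw [cauchy_map_iff]
    refine ⟨inferInstance, ?_⟩
    rw [Metric.uniformity_basis_dist.tendsto_right_iff]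
    intro ε hε
    obtain ⟨δ, hδ, hδ'⟩ := h (ε / 2) (by linarith)
    have hmem : {v : ℝ | v ≠ y ∧ |v - y| < δ} ∈ 𝓝[≠] y := by
      have h1 : {v : ℝ | |v - y| < δ} ∈ 𝓝 y := by
        simpa [Metric.ball, Real.dist_eq] using Metric.ball_mem_nhds y hδ
      have h2 : {v : ℝ | |v - y| < δ} ∩ {y}ᶜ ∈ 𝓝[≠] y :=
        Filter.inter_mem (mem_nhdsWithin_of_mem_nhds h1) self_mem_nhdsWithin
      refine Filter.mem_of_superset h2 ?_
      intro v hv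
      exact ⟨hv.2, hv.1⟩
    filter_upwards [Filter.prod_mem_prod hmem hmem] with p hp
    rw [dist_eq_norm]
    exact lt_of_le_of_lt (hδ' p.1 p.2 hp.1.1 hp.2.1 hp.1.2 hp.2.2) (by linarith)
  obtain ⟨L, hL⟩ := CompleteSpace.complete hc
  exact ⟨L, hL⟩

lemma mem_ne_abs_lt {y δ : ℝ} (hδ : 0 < δ) : {v : ℝ | v ≠ y ∧ |v - y| < δ} ∈ 𝓝[≠] y := by
  have h1 : {v : ℝ | |v - y| < δ} ∈ 𝓝 y := by
    simpa [Metric.ball, Real.dist_eq] using Metric.ball_mem_nhds y hδ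
  have h2 : {v : ℝ | |v - y| < δ} ∩ {y}ᶜ ∈ 𝓝[≠] y :=
    Filter.inter_mem (mem_nhdsWithin_of_mem_nhds h1) self_mem_nhdsWithin
  exact Filter.mem_of_superset h2 fun v hv => ⟨hv.2, hv.1⟩

noncomputable def rectQ (k : ℝ × ℝ → ℂ) (x s t : ℝ) : ℂ :=
  ((s : ℂ) * (t : ℂ))⁻¹ * (k (x + s, x + t) - k (x, x + t) - k (x + s, x) + k (x, x))

lemma rect_lim (k : ℝ × ℝ → ℂ) (U : Set (ℝ × ℝ)) (hUopen : IsOpen U)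
    (hs : IsClassSn 1 U k) {x : ℝ} (hxU : (x, x) ∈ U) :
    ∀ ε > 0, ∃ δ > 0, ∀ a b : ℝ, a ≠ 0 → b ≠ 0 → |a| < δ → |b| < δ →
      ‖rectQ k x a b - pderiv2 (pderiv1 k) (x, x)‖ ≤ ε := by
  intro ε hε
  set m : ℝ × ℝ → ℂ := pderiv2 (pderiv1 k) with hm
  have hcontm : ContinuousOn m U := by
    have := hs.2.2 1 le_rfl 1 le_rfl
    simpa [Function.iterate_one] using this
  have hca : ContinuousAt m (x, x) := hcontm.continuousAt (hUopen.mem_nhds hxU)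
  obtain ⟨δ₁, hδ₁pos, hδ₁⟩ := Metric.isOpen_iff.mp hUopen _ hxU
  obtain ⟨δ₂, hδ₂pos, hδ₂⟩ := Metric.continuousAt_iff.mp hca ε hε
  refine ⟨min δ₁ δ₂, lt_min hδ₁pos hδ₂pos, fun a b ha hb haδ hbδ => ?_⟩
  have memb : ∀ s t : ℝ, |s| ≤ |a| → |t| ≤ |b| →
      (x + s, x + t) ∈ U ∧ ‖m (x + s, x + t) - m (x, x)‖ ≤ ε := by
    intro s t hsa htb
    have hdist : dist ((x + s, x + t) : ℝ × ℝ) (x, x) < min δ₁ δ₂ := by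
      rw [Prod.dist_eq]
      simp only [Real.dist_eq, add_sub_cancel_left]
      exact max_lt (lt_of_le_of_lt hsa haδ) (lt_of_le_of_lt htb hbδ)
    constructor
    · exact hδ₁ (Metric.mem_ball.mpr (lt_of_lt_of_le hdist (min_le_left _ _)))
    · rw [← dist_eq_norm]
      exact le_of_lt (hδ₂ (lt_of_lt_of_le hdist (min_le_right _ _)))
  have inner : ∀ s : ℝ, |s| ≤ |a| →
      ‖pderiv1 k (x + s, x + b) - pderiv1 k (x + s, x) - b • m (x, x)‖ ≤ ε * |b| := by
    intro s hsa
    have hder : ∀ t ∈ Set.uIcc (0:ℝ) b,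
        HasDerivWithinAt (fun t : ℝ => pderiv1 k (x + s, x + t) - t • m (x, x))
          (m (x + s, x + t) - m (x, x)) (Set.uIcc (0:ℝ) b) t := by
      intro t ht
      have hmem := (memb s t hsa (abs_le_of_mem_uIcc ht)).1
      have hdiff := hs.2.1 1 le_rfl 0 one_pos (x + s, x + t) hmem
      simp only [Function.iterate_one, Function.iterate_zero, id_eq] at hdiff
      have hout : HasDerivAt (fun v => pderiv1 k (x + s, v))
          (deriv (fun v => pderiv1 k (x + s, v)) (x + t)) (x + t) := hdiff.hasDerivAt
      have hin : HasDerivAt (fun t : ℝ => x + t) 1 t := (hasDerivAt_id t).const_add x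
      have hcomp := HasDerivAt.scomp t hout hin
      have hsm : HasDerivAt (fun t : ℝ => t • m (x, x)) ((1 : ℝ) • m (x, x)) t :=
        (hasDerivAt_id t).smul_const (m (x, x))
      have : HasDerivAt (fun t : ℝ => pderiv1 k (x + s, x + t) - t • m (x, x))
          ((1:ℝ) • deriv (fun v => pderiv1 k (x + s, v)) (x + t) - (1 : ℝ) • m (x, x)) t :=
        hcomp.sub hsm
      have heqm : deriv (fun v => pderiv1 k (x + s, v)) (x + t) = m (x + s, x + t) := rfl
      rw [heqm] at this
      simpa [mul_one, one_smul] using this.hasDerivWithinAt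
    have hbound : ∀ t ∈ Set.uIcc (0:ℝ) b,
        ‖m (x + s, x + t) - m (x, x)‖ ≤ ε := fun t ht =>
      (memb s t hsa (abs_le_of_mem_uIcc ht)).2
    have := Convex.norm_image_sub_le_of_norm_hasDerivWithin_le hder hbound
      (convex_uIcc _ _) (Set.left_mem_uIcc) (Set.right_mem_uIcc)
    simpa [Real.norm_eq_abs, add_zero, sub_zero, zero_smul, sub_right_comm] using this
  have outer : ∀ s ∈ Set.uIcc (0:ℝ) a,
      HasDerivWithinAt (fun s : ℝ => k (x + s, x + b) - k (x + s, x) - s • (b • m (x, x)))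
        (pderiv1 k (x + s, x + b) - pderiv1 k (x + s, x) - b • m (x, x))
        (Set.uIcc (0:ℝ) a) s := by
    intro s hs'
    have hsa := abs_le_of_mem_uIcc hs'
    have hmem1 := (memb s b hsa le_rfl).1
    have hmem2 : ((x + s, x) : ℝ × ℝ) ∈ U := by
      have := (memb s 0 hsa (by simp [abs_nonneg])).1
      simpa using this
    have hd1 := hs.1 0 one_pos (x + s, x + b) hmem1
    simp only [Function.iterate_zero, id_eq] at hd1
    have hd2 := hs.1 0 one_pos (x + s, x) hmem2
    simp only [Function.iterate_zero, id_eq] at hd2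
    have hin : HasDerivAt (fun s : ℝ => x + s) 1 s := (hasDerivAt_id s).const_add x
    have h1 := HasDerivAt.scomp s hd1.hasDerivAt hin
    have h2 := HasDerivAt.scomp s hd2.hasDerivAt hin
    have hsm : HasDerivAt (fun s : ℝ => s • (b • m (x, x))) ((1:ℝ) • (b • m (x, x))) s :=
      (hasDerivAt_id s).smul_const _
    have := (h1.sub h2).sub hsm
    have heq1 : deriv (fun u => k (u, x + b)) (x + s) = pderiv1 k (x + s, x + b) := rfl
    have heq2 : deriv (fun u => k (u, x)) (x + s) = pderiv1 k (x + s, x) := rfl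
    rw [heq1, heq2] at this
    simpa [mul_one, one_smul, smul_smul, mul_comm, Function.comp_def, Pi.sub_def] using this.hasDerivWithinAt
  have houtbound : ∀ s ∈ Set.uIcc (0:ℝ) a,
      ‖pderiv1 k (x + s, x + b) - pderiv1 k (x + s, x) - b • m (x, x)‖ ≤ ε * |b| :=
    fun s hs' => inner s (abs_le_of_mem_uIcc hs')
  have hmain := Convex.norm_image_sub_le_of_norm_hasDerivWithin_le outer houtbound
    (convex_uIcc _ _) (Set.left_mem_uIcc) (Set.right_mem_uIcc)
  simp only [Real.norm_eq_abs, add_zero, sub_zero, zero_smul] at hmain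
  have hrw : rectQ k x a b - m (x, x)
      = ((a * b)⁻¹ : ℝ) • (k (x + a, x + b) - k (x + a, x) - a • (b • m (x, x))
          - (k (x, x + b) - k (x, x))) := by
    rw [rectQ]; simp only [Complex.real_smul]
    push_cast
    have hab : (a : ℂ) * (b : ℂ) ≠ 0 := by
      simp [ha, hb]
    field_simp
    ring
  rw [hrw, norm_smul, Real.norm_eq_abs, abs_inv, abs_mul]
  have habpos : 0 < |a| * |b| := mul_pos (abs_pos.mpr ha) (abs_pos.mpr hb)
  calc (|a| * |b|)⁻¹ * ‖k (x + a, x + b) - k (x + a, x) - a • (b • m (x, x))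
          - (k (x, x + b) - k (x, x))‖
      ≤ (|a| * |b|)⁻¹ * (ε * |b| * |a|) := by
        apply mul_le_mul_of_nonneg_left hmain (by positivity)
    _ = ε := by field_simp

lemma stage1 {Ω : Set ℝ} (hΩ : IsOpen Ω) {k : ℝ × ℝ → ℂ}
    (hpd : ∀ (n : ℕ) (x : Fin n → ℝ), (∀ i, x i ∈ Ω) → ∀ ξ : Fin n → ℂ,
      0 ≤ ∑ i, ∑ j, k (x i, x j) * ξ i * (starRingEnd ℂ) (ξ j))
    {U : Set (ℝ × ℝ)} (hUopen : IsOpen U) (hdiag : ∀ x ∈ Ω, (x, x) ∈ U)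
    (hs : IsClassSn 1 U k) :
    ∀ x ∈ Ω, ∀ y ∈ Ω, HasDerivAt (fun u => k (u, y)) (pderiv1 k (x, y)) x := by
  intro x hx y hy
  suffices h : ∃ L, Tendsto (slope (fun u => k (u, y)) x) (𝓝[≠] x) (𝓝 L) by
    obtain ⟨L, hL⟩ := h
    have hd : HasDerivAt (fun u => k (u, y)) L x := hasDerivAt_iff_tendsto_slope.mpr hL
    have he : pderiv1 k (x, y) = L := hd.deriv
    rw [he]; exact hd
  apply exists_lim_of_cauchy
  intro ε hε
  set m : ℝ × ℝ → ℂ := pderiv2 (pderiv1 k) with hm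
  set C : ℝ := ‖k (y, y)‖ + 1 with hC
  have hCpos : 0 < C := by positivity
  set ε' : ℝ := ε ^ 2 / (4 * C) with hε'
  have hε'pos : 0 < ε' := by positivity
  obtain ⟨δ₀, hδ₀, hrect⟩ := rect_lim k U hUopen hs (hdiag x hx) ε' hε'pos
  obtain ⟨δΩ, hδΩ, hball⟩ := Metric.isOpen_iff.mp hΩ x hx
  refine ⟨min δ₀ δΩ, lt_min hδ₀ hδΩ, fun v w hvx hwx hv hw => ?_⟩
  have hvΩ : v ∈ Ω := hball (by
    rw [Metric.mem_ball, Real.dist_eq]; exact lt_of_lt_of_le hv (min_le_right _ _))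
  have hwΩ : w ∈ Ω := hball (by
    rw [Metric.mem_ball, Real.dist_eq]; exact lt_of_lt_of_le hw (min_le_right _ _))
  have hv0 : v - x ≠ 0 := sub_ne_zero.mpr hvx
  have hw0 : w - x ≠ 0 := sub_ne_zero.mpr hwx
  have hvδ : |v - x| < δ₀ := lt_of_lt_of_le hv (min_le_left _ _)
  have hwδ : |w - x| < δ₀ := lt_of_lt_of_le hw (min_le_left _ _)
  set X : Fin 4 → ℝ := ![v, w, x, y] with hX
  have hXΩ : ∀ i, X i ∈ Ω := by
    intro i; fin_cases i <;> simp [hX] <;> assumption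
  set A : Fin 4 → ℂ :=
    ![((v - x : ℝ) : ℂ)⁻¹, -((w - x : ℝ) : ℂ)⁻¹,
      -((v - x : ℝ) : ℂ)⁻¹ + ((w - x : ℝ) : ℂ)⁻¹, 0] with hA
  set Bc : Fin 4 → ℂ := ![0, 0, 0, 1] with hBc
  have hcs := Bfm_cs hpd X hXΩ A Bc
  have hvC : ((v - x : ℝ) : ℂ) ≠ 0 := Complex.ofReal_ne_zero.mpr hv0
  have hwC : ((w - x : ℝ) : ℂ) ≠ 0 := Complex.ofReal_ne_zero.mpr hw0
  have hab : Bfm k X A Bc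
      = slope (fun u => k (u, y)) x v - slope (fun u => k (u, y)) x w := by
    rw [slope_def_module, slope_def_module]
    simp only [Bfm, hX, hA, hBc, Fin.sum_univ_four, Matrix.cons_val_zero, Matrix.cons_val_one,
      Matrix.head_cons, Matrix.cons_val_two, Matrix.tail_cons, Matrix.cons_val_three,
      map_zero, map_one, map_add, map_neg, map_inv₀, Complex.conj_ofReal, Complex.real_smul]
    push_cast
    field_simp
    ring
  have hbb : Bfm k X Bc Bc = k (y, y) := by
    simp [Bfm, hX, hBc, Fin.sum_univ_four]
  have haae : Bfm k X A A
      = rectQ k x (v - x) (v - x) - rectQ k x (v - x) (w - x)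
        - rectQ k x (w - x) (v - x) + rectQ k x (w - x) (w - x) := by
    simp only [Bfm, rectQ, hX, hA, Fin.sum_univ_four, Matrix.cons_val_zero, Matrix.cons_val_one,
      Matrix.head_cons, Matrix.cons_val_two, Matrix.tail_cons, Matrix.cons_val_three, map_zero,
      map_one, map_add, map_neg, map_inv₀, Complex.conj_ofReal, mul_inv,
      show x + (v - x) = v by ring, show x + (w - x) = w by ring]
    ring
  have haa : ‖Bfm k X A A‖ ≤ 4 * ε' := by
    rw [haae, show rectQ k x (v - x) (v - x) - rectQ k x (v - x) (w - x)
        - rectQ k x (w - x) (v - x) + rectQ k x (w - x) (w - x)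
      = (rectQ k x (v - x) (v - x) - m (x, x)) - (rectQ k x (v - x) (w - x) - m (x, x))
        - (rectQ k x (w - x) (v - x) - m (x, x)) + (rectQ k x (w - x) (w - x) - m (x, x))
      by ring]
    have b1 := hrect (v - x) (v - x) hv0 hv0 hvδ hvδ
    have b2 := hrect (v - x) (w - x) hv0 hw0 hvδ hwδ
    have b3 := hrect (w - x) (v - x) hw0 hv0 hwδ hvδ
    have b4 := hrect (w - x) (w - x) hw0 hw0 hwδ hwδ
    exact le_trans (norm_comb4 _ _ _ _) (by linarith)
  have hre_aa : (Bfm k X A A).re ≤ 4 * ε' := by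
    refine le_trans (le_trans (le_abs_self _) ?_) haa
    exact Complex.abs_re_le_norm _
  have hre_bb : (Bfm k X Bc Bc).re ≤ C := by
    rw [hbb, hC]
    have := Complex.abs_re_le_norm (k (y, y))
    have := le_abs_self (k (y, y)).re
    linarith [Complex.abs_re_le_norm (k (y, y)),
      (le_abs_self (k (y, y)).re).trans ((Complex.abs_re_le_norm (k (y,y))) : |(k (y,y)).re| ≤ ‖k (y,y)‖)]
  have hre_aa0 := (Bfm_self_nonneg hpd X hXΩ A).1
  have hre_bb0 := (Bfm_self_nonneg hpd X hXΩ Bc).1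
  have hprod : (Bfm k X A A).re * (Bfm k X Bc Bc).re ≤ (4 * ε') * C :=
    mul_le_mul hre_aa hre_bb hre_bb0 (by positivity)
  have hfin : ‖slope (fun u => k (u, y)) x v - slope (fun u => k (u, y)) x w‖ ^ 2 ≤ ε ^ 2 := by
    rw [← hab]
    have h4C : (4 * ε') * C = ε ^ 2 := by
      rw [hε']; field_simp
    linarith [hcs]
  nlinarith [norm_nonneg (slope (fun u => k (u, y)) x v - slope (fun u => k (u, y)) x w), hε, hfin]

lemma tendsto_shift (x : ℝ) : Tendsto (fun h : ℝ => x + h) (𝓝[≠] 0) (𝓝[≠] x) := by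
  rw [tendsto_nhdsWithin_iff]
  constructor
  · have h1 : Tendsto (fun h : ℝ => x + h) (𝓝 0) (𝓝 x) := by
      simpa using (continuous_add_left x).tendsto (0 : ℝ)
    exact h1.mono_left nhdsWithin_le_nhds
  · filter_upwards [self_mem_nhdsWithin] with h hh
    simpa using hh

lemma rectQ_tendsto (k : ℝ × ℝ → ℂ) (U : Set (ℝ × ℝ)) (hUopen : IsOpen U)
    (hs : IsClassSn 1 U k) {x : ℝ} (hxU : (x, x) ∈ U) :
    Tendsto (fun h : ℝ => rectQ k x h h) (𝓝[≠] 0) (𝓝 (pderiv2 (pderiv1 k) (x, x))) := by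
  rw [Metric.tendsto_nhds]
  intro ε hε
  obtain ⟨δ, hδ, hδ'⟩ := rect_lim k U hUopen hs hxU (ε / 2) (by linarith)
  filter_upwards [mem_ne_abs_lt hδ (y := 0)] with h hh
  rw [dist_eq_norm]
  have hlt : |h| < δ := by simpa using hh.2
  have := hδ' h h hh.1 hh.1 hlt hlt
  linarith

lemma quot_tendsto {Ω : Set ℝ} (hΩ : IsOpen Ω) {k : ℝ × ℝ → ℂ}
    (hpd : ∀ (n : ℕ) (x : Fin n → ℝ), (∀ i, x i ∈ Ω) → ∀ ξ : Fin n → ℂ,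
      0 ≤ ∑ i, ∑ j, k (x i, x j) * ξ i * (starRingEnd ℂ) (ξ j))
    {U : Set (ℝ × ℝ)} (hUopen : IsOpen U) (hdiag : ∀ x ∈ Ω, (x, x) ∈ U)
    (hs : IsClassSn 1 U k) {x z : ℝ} (hx : x ∈ Ω) (hz : z ∈ Ω) :
    Tendsto (fun h : ℝ => ((h : ℂ))⁻¹ * (k (x + h, z) - k (x, z))) (𝓝[≠] 0)
      (𝓝 (pderiv1 k (x, z))) := by
  have hd := stage1 hΩ hpd hUopen hdiag hs x hx z hz
  have hT := (hasDerivAt_iff_tendsto_slope.mp hd).comp (tendsto_shift x)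
  refine hT.congr fun h => ?_
  show slope (fun u => k (u, z)) x (x + h) = _
  rw [slope_def_module]
  simp [add_sub_cancel_left, Complex.real_smul, Complex.ofReal_inv]

lemma mixed_deriv1 {Ω : Set ℝ} (hΩ : IsOpen Ω) {k : ℝ × ℝ → ℂ}
    (hpd : ∀ (n : ℕ) (x : Fin n → ℝ), (∀ i, x i ∈ Ω) → ∀ ξ : Fin n → ℂ,
      0 ≤ ∑ i, ∑ j, k (x i, x j) * ξ i * (starRingEnd ℂ) (ξ j))
    {U : Set (ℝ × ℝ)} (hUopen : IsOpen U) (hdiag : ∀ x ∈ Ω, (x, x) ∈ U)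
    (hs : IsClassSn 1 U k) :
    ∀ x ∈ Ω, ∀ y ∈ Ω, DifferentiableAt ℝ (fun v => pderiv1 k (x, v)) y := by
  intro x hx y hy
  suffices h : ∃ L, Tendsto (slope (fun v => pderiv1 k (x, v)) y) (𝓝[≠] y) (𝓝 L) by
    obtain ⟨L, hL⟩ := h
    exact (hasDerivAt_iff_tendsto_slope.mpr hL).differentiableAt
  apply exists_lim_of_cauchy
  intro ε hε
  set m : ℝ × ℝ → ℂ := pderiv2 (pderiv1 k) with hm
  set C : ℝ := ‖m (x, x)‖ + 1 with hC
  have hCpos : 0 < C := by positivity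
  set ε' : ℝ := ε ^ 2 / (4 * C) with hε'
  have hε'pos : 0 < ε' := by positivity
  obtain ⟨δy, hδy, hrecty⟩ := rect_lim k U hUopen hs (hdiag y hy) ε' hε'pos
  obtain ⟨δΩ, hδΩ, hball⟩ := Metric.isOpen_iff.mp hΩ y hy
  refine ⟨min δy δΩ, lt_min hδy hδΩ, fun v w hvy hwy hv hw => ?_⟩
  have hvΩ : v ∈ Ω := hball (by
    rw [Metric.mem_ball, Real.dist_eq]; exact lt_of_lt_of_le hv (min_le_right _ _))
  have hwΩ : w ∈ Ω := hball (by
    rw [Metric.mem_ball, Real.dist_eq]; exact lt_of_lt_of_le hw (min_le_right _ _))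
  have hv0 : v - y ≠ 0 := sub_ne_zero.mpr hvy
  have hw0 : w - y ≠ 0 := sub_ne_zero.mpr hwy
  have hvδ : |v - y| < δy := lt_of_lt_of_le hv (min_le_left _ _)
  have hwδ : |w - y| < δy := lt_of_lt_of_le hw (min_le_left _ _)
  obtain ⟨δx, hδx, hballx⟩ := Metric.isOpen_iff.mp hΩ x hx
  set g : ℝ → ℂ := fun v => pderiv1 k (x, v) with hg
  set bv : Fin 5 → ℂ :=
    ![0, 0, ((v - y : ℝ) : ℂ)⁻¹, -((w - y : ℝ) : ℂ)⁻¹,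
      -((v - y : ℝ) : ℂ)⁻¹ + ((w - y : ℝ) : ℂ)⁻¹] with hbv
  set E : ℂ := rectQ k y (v - y) (v - y) - rectQ k y (v - y) (w - y)
      - rectQ k y (w - y) (v - y) + rectQ k y (w - y) (w - y) with hE
  have i_bb : ∀ h : ℝ, Bfm k ![x + h, x, v, w, y] bv bv = E := by
    intro h
    simp only [Bfm, rectQ, hbv, hE, Fin.sum_univ_succ, Fin.sum_univ_zero, Matrix.cons_val_zero,
      Matrix.cons_val_succ, map_zero, map_one, map_add, map_neg, map_inv₀, Complex.conj_ofReal,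
      mul_inv, show y + (v - y) = v by ring, show y + (w - y) = w by ring]
    ring
  have i_aa : ∀ h : ℝ, Bfm k ![x + h, x, v, w, y]
      ![(h:ℂ)⁻¹, -(h:ℂ)⁻¹, 0, 0, 0] ![(h:ℂ)⁻¹, -(h:ℂ)⁻¹, 0, 0, 0] = rectQ k x h h := by
    intro h
    simp only [Bfm, rectQ, Fin.sum_univ_succ, Fin.sum_univ_zero, Matrix.cons_val_zero,
      Matrix.cons_val_succ, map_zero, map_one, map_add, map_neg, map_inv₀, Complex.conj_ofReal,
      mul_inv]
    ring
  have i_ab : ∀ h : ℝ, Bfm k ![x + h, x, v, w, y] ![(h:ℂ)⁻¹, -(h:ℂ)⁻¹, 0, 0, 0] bv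
      = ((v - y : ℝ) : ℂ)⁻¹ * ((h:ℂ)⁻¹ * (k (x + h, v) - k (x, v)))
        - ((w - y : ℝ) : ℂ)⁻¹ * ((h:ℂ)⁻¹ * (k (x + h, w) - k (x, w)))
        + (-((v - y : ℝ) : ℂ)⁻¹ + ((w - y : ℝ) : ℂ)⁻¹)
            * ((h:ℂ)⁻¹ * (k (x + h, y) - k (x, y))) := by
    intro h
    simp only [Bfm, hbv, Fin.sum_univ_succ, Fin.sum_univ_zero, Matrix.cons_val_zero,
      Matrix.cons_val_succ, map_zero, map_one, map_add, map_neg, map_inv₀, Complex.conj_ofReal]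
    ring
  -- limits as h → 0
  have Tv := quot_tendsto hΩ hpd hUopen hdiag hs hx hvΩ
  have Tw := quot_tendsto hΩ hpd hUopen hdiag hs hx hwΩ
  have Ty := quot_tendsto hΩ hpd hUopen hdiag hs hx hy
  have hlim_eq : ((v - y : ℝ) : ℂ)⁻¹ * pderiv1 k (x, v)
      - ((w - y : ℝ) : ℂ)⁻¹ * pderiv1 k (x, w)
      + (-((v - y : ℝ) : ℂ)⁻¹ + ((w - y : ℝ) : ℂ)⁻¹) * pderiv1 k (x, y)
      = slope g y v - slope g y w := by
    rw [slope_def_module, slope_def_module]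
    simp only [hg, Complex.real_smul, Complex.ofReal_inv]
    ring
  have T_ab : Tendsto (fun h : ℝ => Bfm k ![x + h, x, v, w, y]
      ![(h:ℂ)⁻¹, -(h:ℂ)⁻¹, 0, 0, 0] bv) (𝓝[≠] 0) (𝓝 (slope g y v - slope g y w)) := by
    rw [← hlim_eq]
    have hcomb : Tendsto (fun h : ℝ =>
        ((v - y : ℝ) : ℂ)⁻¹ * ((h:ℂ)⁻¹ * (k (x + h, v) - k (x, v)))
        - ((w - y : ℝ) : ℂ)⁻¹ * ((h:ℂ)⁻¹ * (k (x + h, w) - k (x, w)))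
        + (-((v - y : ℝ) : ℂ)⁻¹ + ((w - y : ℝ) : ℂ)⁻¹)
            * ((h:ℂ)⁻¹ * (k (x + h, y) - k (x, y)))) (𝓝[≠] 0)
        (𝓝 (((v - y : ℝ) : ℂ)⁻¹ * pderiv1 k (x, v)
          - ((w - y : ℝ) : ℂ)⁻¹ * pderiv1 k (x, w)
          + (-((v - y : ℝ) : ℂ)⁻¹ + ((w - y : ℝ) : ℂ)⁻¹) * pderiv1 k (x, y))) :=
      ((Tv.const_mul _).sub (Tw.const_mul _)).add (Ty.const_mul _)
    exact hcomb.congr fun h => (i_ab h).symm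
  have T_aa_re : Tendsto (fun h : ℝ => (Bfm k ![x + h, x, v, w, y]
      ![(h:ℂ)⁻¹, -(h:ℂ)⁻¹, 0, 0, 0] ![(h:ℂ)⁻¹, -(h:ℂ)⁻¹, 0, 0, 0]).re)
      (𝓝[≠] 0) (𝓝 ((m (x, x)).re)) := by
    have hT := (Complex.continuous_re.tendsto _).comp
      (rectQ_tendsto k U hUopen hs (hdiag x hx))
    exact hT.congr fun h => by rw [Function.comp_apply, ← i_aa h]
  have T_rhs : Tendsto (fun h : ℝ => (Bfm k ![x + h, x, v, w, y]
        ![(h:ℂ)⁻¹, -(h:ℂ)⁻¹, 0, 0, 0] ![(h:ℂ)⁻¹, -(h:ℂ)⁻¹, 0, 0, 0]).re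
      * (Bfm k ![x + h, x, v, w, y] bv bv).re)
      (𝓝[≠] 0) (𝓝 ((m (x, x)).re * E.re)) := by
    refine T_aa_re.mul (tendsto_const_nhds.congr fun h => by rw [i_bb h])
  have T_lhs : Tendsto (fun h : ℝ => ‖Bfm k ![x + h, x, v, w, y]
      ![(h:ℂ)⁻¹, -(h:ℂ)⁻¹, 0, 0, 0] bv‖ ^ 2)
      (𝓝[≠] 0) (𝓝 (‖slope g y v - slope g y w‖ ^ 2)) := (T_ab.norm).pow 2
  have hev : ∀ᶠ h in 𝓝[≠] (0:ℝ), ‖Bfm k ![x + h, x, v, w, y]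
        ![(h:ℂ)⁻¹, -(h:ℂ)⁻¹, 0, 0, 0] bv‖ ^ 2
      ≤ (Bfm k ![x + h, x, v, w, y] ![(h:ℂ)⁻¹, -(h:ℂ)⁻¹, 0, 0, 0]
          ![(h:ℂ)⁻¹, -(h:ℂ)⁻¹, 0, 0, 0]).re
        * (Bfm k ![x + h, x, v, w, y] bv bv).re := by
    filter_upwards [mem_ne_abs_lt hδx (y := 0)] with h hh
    refine Bfm_cs hpd _ ?_ _ _
    intro i
    have hxh : x + h ∈ Ω := hballx (by
      rw [Metric.mem_ball, Real.dist_eq]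
      simpa using hh.2)
    fin_cases i <;> simpa using by assumption
  have key := le_of_tendsto_of_tendsto T_lhs T_rhs hev
  -- bound the right-hand side
  have hE4 : ‖E‖ ≤ 4 * ε' := by
    rw [hE, show rectQ k y (v - y) (v - y) - rectQ k y (v - y) (w - y)
        - rectQ k y (w - y) (v - y) + rectQ k y (w - y) (w - y)
      = (rectQ k y (v - y) (v - y) - m (y, y)) - (rectQ k y (v - y) (w - y) - m (y, y))
        - (rectQ k y (w - y) (v - y) - m (y, y)) + (rectQ k y (w - y) (w - y) - m (y, y))
      by ring]
    have b1 := hrecty (v - y) (v - y) hv0 hv0 hvδ hvδ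
    have b2 := hrecty (v - y) (w - y) hv0 hw0 hvδ hwδ
    have b3 := hrecty (w - y) (v - y) hw0 hv0 hwδ hvδ
    have b4 := hrecty (w - y) (w - y) hw0 hw0 hwδ hwδ
    exact le_trans (norm_comb4 _ _ _ _) (by linarith)
  have hrhs : (m (x, x)).re * E.re ≤ C * (4 * ε') := by
    calc (m (x, x)).re * E.re ≤ |(m (x, x)).re| * |E.re| := by
          rw [← abs_mul]; exact le_abs_self _
      _ ≤ ‖m (x, x)‖ * ‖E‖ := by
          refine mul_le_mul ?_ ?_ (abs_nonneg _) (norm_nonneg _)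
          · exact Complex.abs_re_le_norm _
          · exact Complex.abs_re_le_norm _
      _ ≤ C * (4 * ε') := by
          refine mul_le_mul (by rw [hC]; linarith) hE4 (norm_nonneg _) (by positivity)
  have hfin : ‖slope g y v - slope g y w‖ ^ 2 ≤ ε ^ 2 := by
    have h4C : C * (4 * ε') = ε ^ 2 := by
      rw [hε']; field_simp
    linarith [key]
  have : ‖slope g y v - slope g y w‖ ≤ ε := by
    nlinarith [norm_nonneg (slope g y v - slope g y w), hε, hfin]
  simpa [hg] using this

/-- For a positive definite kernel `k` on an open `Ω ⊆ ℝ` of class `S₁`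
on an open neighborhood of the diagonal, both second-order mixed partial derivatives
`∂²k/∂v∂u` and `∂²k/∂u∂v` exist at every point of `Ω × Ω`. -/
theorem stmt16 (Ω : Set ℝ) (hΩ : IsOpen Ω) (k : ℝ × ℝ → ℂ)
    (hpd : ∀ (n : ℕ) (x : Fin n → ℝ), (∀ i, x i ∈ Ω) → ∀ ξ : Fin n → ℂ,
      0 ≤ ∑ i, ∑ j, k (x i, x j) * ξ i * (starRingEnd ℂ) (ξ j))
    (U : Set (ℝ × ℝ)) (hUopen : IsOpen U)
    (hdiag : ∀ x ∈ Ω, (x, x) ∈ U) (hUsub : U ⊆ Ω ×ˢ Ω)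
    (hs : IsClassSn 1 U k) :
    ∀ p ∈ Ω ×ˢ Ω,
      DifferentiableAt ℝ (fun v => pderiv1 k (p.1, v)) p.2 ∧
      DifferentiableAt ℝ (fun u => pderiv2 k (u, p.2)) p.1 := by
  intro p hp
  obtain ⟨x, y⟩ := p
  rw [Set.mem_prod] at hp
  obtain ⟨hx, hy⟩ := hp
  constructor
  · exact mixed_deriv1 hΩ hpd hUopen hdiag hs x hx y hy
  · have hsym : ∀ u ∈ Ω, pderiv2 k (u, y) = star (pderiv1 k (y, u)) := by
      intro u hu
      have hEq : (fun t => k (u, t)) =ᶠ[𝓝 y] fun t => star (k (t, u)) := by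
        filter_upwards [hΩ.mem_nhds hy] with t ht
        have := herm_pt hpd ht hu
        rw [starRingEnd_apply] at this
        exact this
      have hd := stage1 hΩ hpd hUopen hdiag hs y hy u hu
      have hql : pderiv2 k (u, y) = deriv (fun t => k (u, t)) y := rfl
      rw [hql, hEq.deriv_eq, hd.star.deriv]
    have hEq2 : (fun u => pderiv2 k (u, y)) =ᶠ[𝓝 x] fun u => star (pderiv1 k (y, u)) := by
      filter_upwards [hΩ.mem_nhds hx] with u hu
      exact hsym u hu
    have hdiff : DifferentiableAt ℝ (fun u => pderiv1 k (y, u)) x :=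
      mixed_deriv1 hΩ hpd hUopen hdiag hs y hy x hx
    exact hdiff.star.congr_of_eventuallyEq hEq2
end

section
/- Let Ω ⊆ ℂ be open, let S = codiff(Ω) = {x − conj(y) : x, y ∈ Ω} (an open subset of ℂ), and let f : S → ℂ be a positive definite function, i.e. k(x,y) := f(x − conj(y)) is a positive definite kernel on Ω. If f is holomorphic (complex differentiable) on some open set U with D_Ω(S) ⊆ U ⊆ S, where D_Ω(S) = {x − conj(x) : x ∈ Ω}, then f is holomorphic on all of S. -/
open Filter Topology ComplexOrder

open Complex ComplexConjugate in
private lemma stmt18_cs_aux (Q B B' d : ℂ)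
    (h : ∀ lam mu : ℂ, 0 ≤ Q * (lam * conj lam) + B * (lam * conj mu)
      + B' * (mu * conj lam) + d * (mu * conj mu)) :
    Complex.normSq B ≤ Q.re * d.re := by
  have hQ : 0 ≤ Q := by simpa using h 1 0
  have hd : 0 ≤ d := by simpa using h 0 1
  have hQre : 0 ≤ Q.re := (Complex.le_def.mp hQ).1
  have hQim : Q.im = 0 := ((Complex.le_def.mp hQ).2).symm
  have hdre : 0 ≤ d.re := (Complex.le_def.mp hd).1
  have hdim : d.im = 0 := ((Complex.le_def.mp hd).2).symm
  have h11 := h 1 1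
  have h1i := h 1 Complex.I
  have e11 : Q * (1*conj 1) + B * (1 * conj 1) + B' * (1 * conj 1) + d * (1 * conj 1)
      = Q + B + B' + d := by simp
  rw [e11] at h11
  have e1i : Q * (1*conj 1) + B * (1 * conj Complex.I) + B' * (Complex.I * conj 1)
      + d * (Complex.I * conj Complex.I) = Q - B * Complex.I + B' * Complex.I + d := by
    simp [Complex.conj_I]; ring
  rw [e1i] at h1i
  have him1 : B.im + B'.im = 0 := by
    have := (Complex.le_def.mp h11).2
    simp [hQim, hdim] at this
    linarith
  have him2 : B'.re = B.re := by
    have := (Complex.le_def.mp h1i).2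
    simp [hQim, hdim, Complex.sub_im, Complex.mul_im, Complex.I_re, Complex.I_im] at this
    linarith
  have hB' : B' = conj B := by
    apply Complex.ext
    · simp [him2]
    · simp; linarith
  subst hB'
  have key : ∀ t : ℝ, 0 ≤ Q.re * (t * t * Complex.normSq B) - 2 * t * Complex.normSq B + d.re := by
    intro t
    have h2 := h ((t:ℂ) * conj B) (-1)
    have hn : B * conj B = (Complex.normSq B : ℂ) := Complex.mul_conj B
    have e2 : Q * (((t:ℂ) * conj B) * conj ((t:ℂ) * conj B))
        + B * (((t:ℂ) * conj B) * conj (-1:ℂ)) + conj B * ((-1) * conj ((t:ℂ) * conj B))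
        + d * ((-1) * conj (-1:ℂ))
        = Q * ((t:ℂ)*(t:ℂ)*(B * conj B)) - (t:ℂ)*(B*conj B) - (t:ℂ)*(B*conj B) + d := by
      simp only [map_mul, Complex.conj_conj, Complex.conj_ofReal, map_neg, map_one]
      ring
    rw [e2, hn] at h2
    have hre := (Complex.le_def.mp h2).1
    simp [Complex.mul_re, hQim] at hre
    nlinarith [hre]
  by_cases hB : Complex.normSq B = 0
  · rw [hB]; positivity
  · have hBpos : 0 < Complex.normSq B := lt_of_le_of_ne (Complex.normSq_nonneg B) (Ne.symm hB)
    rcases eq_or_lt_of_le hQre with hQ0 | hQpos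
    · exfalso
      have := key ((d.re + 1) / (2 * Complex.normSq B))
      rw [← hQ0] at this
      have h2 : 2 * ((d.re + 1) / (2 * Complex.normSq B)) * Complex.normSq B = d.re + 1 := by
        field_simp
      nlinarith [this]
    · have := key (1 / Q.re)
      have h2 : Q.re * (1 / Q.re * (1 / Q.re) * Complex.normSq B)
          = (1/Q.re) * Complex.normSq B := by
        field_simp
      have h3 : 2 * (1/Q.re) * Complex.normSq B = 2 * ((1/Q.re) * Complex.normSq B) := by ring
      rw [h2, h3] at this
      have h4 : (1/Q.re) * Complex.normSq B ≤ d.re := by linarith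
      calc Complex.normSq B = Q.re * ((1/Q.re) * Complex.normSq B) := by field_simp
        _ ≤ Q.re * d.re := by nlinarith

set_option maxHeartbeats 1000000 in
open Complex ComplexConjugate in
private lemma stmt18_Ebound (f : ℂ → ℂ) (z₀ : ℂ) (r : ℝ) (hr : 0 < r)
    (hf : AnalyticOnNhd ℂ f (Metric.ball z₀ r)) :
    ∃ L : ℂ, ∀ ε : ℝ, 0 < ε → ∃ δ : ℝ, 0 < δ ∧ ∀ s t : ℂ, s ≠ 0 → t ≠ 0 → ‖s‖ < δ → ‖t‖ < δ →
      ‖(f (z₀ + s - conj t) - f (z₀ - conj t) - f (z₀ + s) + f z₀) / (s * conj t)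
        - (-(deriv (deriv f) z₀))‖ ≤ ε := by
  have hf' : AnalyticOnNhd ℂ (deriv f) (Metric.ball z₀ r) := hf.deriv
  have hf'' : AnalyticOnNhd ℂ (deriv (deriv f)) (Metric.ball z₀ r) := hf'.deriv
  refine ⟨-(deriv (deriv f) z₀), fun ε hε => ?_⟩
  have hcont : ContinuousAt (deriv (deriv f)) z₀ :=
    (hf'' z₀ (Metric.mem_ball_self hr)).continuousAt
  obtain ⟨δ₁, hδ₁, hδ₁'⟩ := Metric.continuousAt_iff.mp hcont ε hε
  have hρ : 0 < min δ₁ r := lt_min hδ₁ hr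
  set ρ : ℝ := min δ₁ r with hρdef
  refine ⟨ρ/2, by positivity, fun s t hs ht hsδ htδ => ?_⟩
  have hball : Metric.ball z₀ ρ ⊆ Metric.ball z₀ r :=
    Metric.ball_subset_ball (min_le_right _ _)
  have hsub : Metric.ball z₀ (ρ/2) ⊆ Metric.ball z₀ ρ := Metric.ball_subset_ball (by linarith)
  have hshift : ∀ z : ℂ, z ∈ Metric.ball z₀ (ρ/2) → z - conj t ∈ Metric.ball z₀ ρ := by
    intro z hz
    rw [Metric.mem_ball, dist_eq_norm] at hz ⊢
    calc ‖z - conj t - z₀‖ ≤ ‖z - z₀‖ + ‖conj t‖ := by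
          rw [sub_right_comm]; exact norm_sub_le _ _
      _ < ρ/2 + ρ/2 := by rw [RCLike.norm_conj]; exact add_lt_add hz htδ
      _ = ρ := by ring
  have claim1 : ∀ z : ℂ, z ∈ Metric.ball z₀ (ρ/2) →
      ‖(deriv f (z - conj t) - deriv f z) - (-(deriv (deriv f) z₀) * conj t)‖ ≤ ε * ‖t‖ := by
    intro z hz
    have hzin : z ∈ Metric.ball z₀ ρ := hsub hz
    have hz2 : z - conj t ∈ Metric.ball z₀ ρ := hshift z hz
    have hder : ∀ w ∈ Metric.ball z₀ ρ,
        HasDerivWithinAt (fun w => deriv f w - deriv (deriv f) z₀ * w)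
          ((fun w => deriv (deriv f) w - deriv (deriv f) z₀) w) (Metric.ball z₀ ρ) w := by
      intro w hw
      have h1 : HasDerivAt (deriv f) (deriv (deriv f) w) w :=
        ((hf' w (hball hw)).differentiableAt).hasDerivAt
      have h2 : HasDerivAt (fun y : ℂ => deriv (deriv f) z₀ * y) (deriv (deriv f) z₀) w := by
        simpa using (hasDerivAt_id w).const_mul (deriv (deriv f) z₀)
      exact (h1.sub h2).hasDerivWithinAt
    have hbound : ∀ w ∈ Metric.ball z₀ ρ,
        ‖(fun w => deriv (deriv f) w - deriv (deriv f) z₀) w‖ ≤ ε := by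
      intro w hw
      have h3 : dist w z₀ < δ₁ := lt_of_lt_of_le (Metric.mem_ball.mp hw) (min_le_left _ _)
      have h4 := hδ₁' h3
      rw [dist_eq_norm] at h4
      exact le_of_lt h4
    have hmvi := Convex.norm_image_sub_le_of_norm_hasDerivWithin_le hder hbound
      (convex_ball z₀ ρ) hz2 hzin
    have heq : (deriv f z - deriv (deriv f) z₀ * z)
        - (deriv f (z - conj t) - deriv (deriv f) z₀ * (z - conj t))
        = -((deriv f (z - conj t) - deriv f z) - (-(deriv (deriv f) z₀) * conj t)) := by ring
    have heq2 : z - (z - conj t) = conj t := by ring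
    rw [heq, heq2, norm_neg, RCLike.norm_conj] at hmvi
    exact hmvi
  have hder2 : ∀ z ∈ Metric.ball z₀ (ρ/2),
      HasDerivWithinAt (fun z => f (z - conj t) - f z - (-(deriv (deriv f) z₀) * conj t) * z)
        ((fun z => (deriv f (z - conj t) - deriv f z) - (-(deriv (deriv f) z₀) * conj t)) z)
        (Metric.ball z₀ (ρ/2)) z := by
    intro z hz
    have hz2 : z - conj t ∈ Metric.ball z₀ ρ := hshift z hz
    have h1 : HasDerivAt (fun z : ℂ => f (z - conj t)) (deriv f (z - conj t)) z := by
      have hc : HasDerivAt (fun z : ℂ => z - conj t) 1 z := (hasDerivAt_id z).sub_const _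
      have hfz : HasDerivAt f (deriv f (z - conj t)) (z - conj t) :=
        ((hf _ (hball hz2)).differentiableAt).hasDerivAt
      have := hfz.comp z hc; rw [mul_one] at this; exact this
    have h2 : HasDerivAt f (deriv f z) z :=
      ((hf z (hball (hsub hz))).differentiableAt).hasDerivAt
    have h3 : HasDerivAt (fun z : ℂ => (-(deriv (deriv f) z₀) * conj t) * z)
        ((-(deriv (deriv f) z₀) * conj t)) z := by
      simpa using (hasDerivAt_id z).const_mul (-(deriv (deriv f) z₀) * conj t)
    exact ((h1.sub h2).sub h3).hasDerivWithinAt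
  have hmvi2 := Convex.norm_image_sub_le_of_norm_hasDerivWithin_le hder2 claim1
    (convex_ball z₀ (ρ/2)) (Metric.mem_ball_self (by positivity))
    (by rw [Metric.mem_ball, dist_eq_norm]; simpa using hsδ : z₀ + s ∈ Metric.ball z₀ (ρ/2))
  have heq3 : (f (z₀ + s - conj t) - f (z₀ + s) - -(deriv (deriv f) z₀) * conj t * (z₀ + s))
      - (f (z₀ - conj t) - f z₀ - -(deriv (deriv f) z₀) * conj t * z₀)
      = (f (z₀ + s - conj t) - f (z₀ - conj t) - f (z₀ + s) + f z₀)
        - (-(deriv (deriv f) z₀)) * (s * conj t) := by ring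
  have heq4 : z₀ + s - z₀ = s := by ring
  rw [heq3, heq4] at hmvi2
  have hst : s * conj t ≠ 0 := mul_ne_zero hs (by simpa using ht)
  rw [div_sub' hst, norm_div,
    div_le_iff₀ (norm_pos_iff.mpr hst)]
  have hcomm : s * (starRingEnd ℂ) t * -(deriv (deriv f) z₀)
      = -(deriv (deriv f) z₀) * (s * conj t) := by ring
  rw [hcomm]
  calc ‖f (z₀ + s - conj t) - f (z₀ - conj t) - f (z₀ + s) + f z₀
        - (-(deriv (deriv f) z₀)) * (s * conj t)‖
      ≤ ε * ‖t‖ * ‖s‖ := hmvi2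
    _ = ε * ‖s * conj t‖ := by rw [norm_mul, RCLike.norm_conj]; ring

set_option maxHeartbeats 2000000 in
open Complex ComplexConjugate in
private lemma stmt18_identity (f : ℂ → ℂ) (a b h h' lam mu : ℂ) (hh : h ≠ 0) (hh' : h' ≠ 0) :
    (∑ i, ∑ j, f ((![a+h, a+h', a, b]) i - conj ((![a+h, a+h', a, b]) j))
      * (![lam/h, -(lam/h'), lam*(1/h' - 1/h), mu]) i
      * conj ((![lam/h, -(lam/h'), lam*(1/h' - 1/h), mu]) j))
    = (((f (a - conj a + h - conj h) - f (a - conj a - conj h) - f (a - conj a + h)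
          + f (a - conj a)) / (h * conj h))
      - ((f (a - conj a + h - conj h') - f (a - conj a - conj h') - f (a - conj a + h)
          + f (a - conj a)) / (h * conj h'))
      - ((f (a - conj a + h' - conj h) - f (a - conj a - conj h) - f (a - conj a + h')
          + f (a - conj a)) / (h' * conj h))
      + ((f (a - conj a + h' - conj h') - f (a - conj a - conj h') - f (a - conj a + h')
          + f (a - conj a)) / (h' * conj h'))) * (lam * conj lam)
    + ((f (a - conj b + h) - f (a - conj b))/h - (f (a - conj b + h') - f (a - conj b))/h')
        * (lam * conj mu)
    + ((f (b - conj a - conj h) - f (b - conj a))/conj h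
        - (f (b - conj a - conj h') - f (b - conj a))/conj h') * (mu * conj lam)
    + f (b - conj b) * (mu * conj mu) := by
  have ch : conj h ≠ 0 := by simpa using hh
  have ch' : conj h' ≠ 0 := by simpa using hh'
  simp only [Fin.sum_univ_four, Matrix.cons_val_zero, Matrix.cons_val_one, Matrix.head_cons,
    Matrix.cons_val_two, Matrix.tail_cons, Matrix.cons_val_three, map_add, map_sub, map_mul,
    map_div₀, map_neg, map_one, Complex.conj_conj]
  field_simp
  ring_nf

private lemma stmt18_quad {T1 T2 T3 T4 L : ℂ} {ε₁ : ℝ}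
    (h1 : ‖T1 - L‖ ≤ ε₁) (h2 : ‖T2 - L‖ ≤ ε₁) (h3 : ‖T3 - L‖ ≤ ε₁) (h4 : ‖T4 - L‖ ≤ ε₁) :
    (T1 - T2 - T3 + T4).re ≤ 4 * ε₁ := by
  have heq : T1 - T2 - T3 + T4 = (T1 - L) - (T2 - L) - (T3 - L) + (T4 - L) := by ring
  have hn : ‖T1 - T2 - T3 + T4‖ ≤ 4 * ε₁ := by
    rw [heq]
    have t1 := norm_add_le ((T1 - L) - (T2 - L) - (T3 - L)) (T4 - L)
    have t2 := norm_sub_le ((T1 - L) - (T2 - L)) (T3 - L)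
    have t3 := norm_sub_le (T1 - L) (T2 - L)
    linarith
  calc (T1 - T2 - T3 + T4).re ≤ ‖T1 - T2 - T3 + T4‖ := Complex.re_le_norm _
    _ = ‖T1 - T2 - T3 + T4‖ := rfl
    _ ≤ 4 * ε₁ := hn

private lemma stmt18_normlt (w : ℂ) (ε : ℝ) (hε : 0 < ε) (h : Complex.normSq w < ε^2) :
    ‖w‖ < ε := by
  have h1 : ‖w‖^2 = Complex.normSq w := by rw [Complex.sq_norm]
  nlinarith [norm_nonneg w]

set_option maxHeartbeats 8000000 in
open Complex ComplexConjugate in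
/-- Let `Ω ⊆ ℂ` be open, `S = codiff(Ω) = {x − conj y : x, y ∈ Ω}` and
`f` a positive definite function on `S`.  If `f` is holomorphic on an open set `U` with
`D_Ω(S) ⊆ U ⊆ S`, then `f` is holomorphic on all of `S`. -/
theorem stmt18 (Ω : Set ℂ) (hΩ : IsOpen Ω)
    (S : Set ℂ) (hS : S = {z | ∃ x ∈ Ω, ∃ y ∈ Ω, z = x - (starRingEnd ℂ) y})
    (f : ℂ → ℂ)
    (hpd : ∀ (n : ℕ) (x : Fin n → ℂ), (∀ i, x i ∈ Ω) → ∀ ξ : Fin n → ℂ,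
      0 ≤ ∑ i, ∑ j, f (x i - (starRingEnd ℂ) (x j)) * ξ i * (starRingEnd ℂ) (ξ j))
    (U : Set ℂ) (hUopen : IsOpen U)
    (hdiag : ∀ x ∈ Ω, x - (starRingEnd ℂ) x ∈ U) (hUsub : U ⊆ S)
    (hhol : ∀ z ∈ U, DifferentiableAt ℂ f z) :
    ∀ z ∈ S, DifferentiableAt ℂ f z := by
  intro z hz
  rw [hS] at hz
  obtain ⟨a, ha, b, hb, rfl⟩ := hz
  have hz₀U : a - conj a ∈ U := hdiag a ha
  obtain ⟨r, hr, hrsub⟩ := Metric.isOpen_iff.mp hUopen _ hz₀U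
  have hdiff : DifferentiableOn ℂ f U := fun u hu => (hhol u hu).differentiableWithinAt
  have hfan : AnalyticOnNhd ℂ f (Metric.ball (a - conj a) r) := fun w hw =>
    hdiff.analyticAt (hUopen.mem_nhds (hrsub hw))
  obtain ⟨L, hL⟩ := stmt18_Ebound f (a - conj a) r hr hfan
  obtain ⟨ρ, hρ, hρsub⟩ := Metric.isOpen_iff.mp hΩ a ha
  have hdge : (0:ℂ) ≤ f (b - conj b) := by
    have := hpd 1 ![b] (by intro i; fin_cases i; exact hb) ![1]
    simpa using this
  have hdre : 0 ≤ (f (b - conj b)).re := (Complex.le_def.mp hdge).1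
  have key : ∀ ε : ℝ, 0 < ε → ∃ δ : ℝ, 0 < δ ∧ ∀ g g' : ℂ, g ≠ 0 → g' ≠ 0 →
      ‖g‖ < δ → ‖g'‖ < δ →
      dist ((f (a - conj b + g) - f (a - conj b)) / g)
        ((f (a - conj b + g') - f (a - conj b)) / g') < ε := by
    intro ε hε
    have hd1 : 0 < (f (b - conj b)).re + 1 := by linarith
    have hε₁ : 0 < ε^2 / (4 * ((f (b - conj b)).re + 1)) := by positivity
    obtain ⟨δ₁, hδ₁, hδ₁'⟩ := hL (ε^2 / (4 * ((f (b - conj b)).re + 1))) hε₁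
    refine ⟨min δ₁ ρ, lt_min hδ₁ hρ, fun g g' hg hg' hgδ hg'δ => ?_⟩
    have hgδ₁ : ‖g‖ < δ₁ := lt_of_lt_of_le hgδ (min_le_left _ _)
    have hg'δ₁ : ‖g'‖ < δ₁ := lt_of_lt_of_le hg'δ (min_le_left _ _)
    have hag : a + g ∈ Ω := hρsub (by
      rw [Metric.mem_ball, dist_eq_norm]
      simpa using lt_of_lt_of_le hgδ (min_le_right _ _))
    have hag' : a + g' ∈ Ω := hρsub (by
      rw [Metric.mem_ball, dist_eq_norm]
      simpa using lt_of_lt_of_le hg'δ (min_le_right _ _))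
    have hmem : ∀ i, (![a+g, a+g', a, b]) i ∈ Ω := by
      intro i
      fin_cases i
      · simpa using hag
      · simpa using hag'
      · simpa using ha
      · simpa using hb
    have hyp : ∀ lam mu : ℂ,
        0 ≤ (((f (a - conj a + g - conj g) - f (a - conj a - conj g) - f (a - conj a + g)
              + f (a - conj a)) / (g * conj g))
          - ((f (a - conj a + g - conj g') - f (a - conj a - conj g') - f (a - conj a + g)
              + f (a - conj a)) / (g * conj g'))
          - ((f (a - conj a + g' - conj g) - f (a - conj a - conj g) - f (a - conj a + g')
              + f (a - conj a)) / (g' * conj g))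
          + ((f (a - conj a + g' - conj g') - f (a - conj a - conj g') - f (a - conj a + g')
              + f (a - conj a)) / (g' * conj g'))) * (lam * conj lam)
        + ((f (a - conj b + g) - f (a - conj b))/g - (f (a - conj b + g') - f (a - conj b))/g')
            * (lam * conj mu)
        + ((f (b - conj a - conj g) - f (b - conj a))/conj g
            - (f (b - conj a - conj g') - f (b - conj a))/conj g') * (mu * conj lam)
        + f (b - conj b) * (mu * conj mu) := by
      intro lam mu
      have H := hpd 4 ![a+g, a+g', a, b] hmem ![lam/g, -(lam/g'), lam*(1/g' - 1/g), mu]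
      rwa [stmt18_identity f a b g g' lam mu hg hg'] at H
    have hcs := stmt18_cs_aux _ _ _ _ hyp
    have hQre := stmt18_quad (hδ₁' g g hg hg hgδ₁ hgδ₁) (hδ₁' g g' hg hg' hgδ₁ hg'δ₁)
      (hδ₁' g' g hg' hg hg'δ₁ hgδ₁) (hδ₁' g' g' hg' hg' hg'δ₁ hg'δ₁)
    have hns := le_trans hcs (mul_le_mul_of_nonneg_right hQre hdre)
    have hlt : (4 * (ε^2 / (4 * ((f (b - conj b)).re + 1)))) * (f (b - conj b)).re < ε^2 := by
      have hfs : (ε^2 / (4 * ((f (b - conj b)).re + 1))) * (4 * ((f (b - conj b)).re + 1))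
          = ε^2 := div_mul_cancel₀ _ (by positivity)
      nlinarith [hε₁]
    rw [dist_eq_norm]
    exact stmt18_normlt _ ε hε (lt_of_le_of_lt hns hlt)
  have hcauchy : Cauchy (Filter.map (fun g => (f (a - conj b + g) - f (a - conj b)) / g)
      (𝓝[≠] (0:ℂ))) := by
    rw [Metric.cauchy_iff]
    constructor
    · exact Filter.map_neBot
    · intro ε hε
      obtain ⟨δ, hδ, hkey⟩ := key ε hε
      refine ⟨(fun g => (f (a - conj b + g) - f (a - conj b)) / g) ''
        (Metric.ball 0 δ \ {0}), ?_, ?_⟩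
      · apply Filter.image_mem_map
        rw [Set.diff_eq]
        exact Filter.inter_mem
          (mem_nhdsWithin_of_mem_nhds (Metric.ball_mem_nhds _ hδ)) self_mem_nhdsWithin
      · rintro x ⟨g, ⟨hgball, hgne⟩, rfl⟩ y ⟨g', ⟨hg'ball, hg'ne⟩, rfl⟩
        have h1 : g ≠ 0 := by simpa using hgne
        have h2 : g' ≠ 0 := by simpa using hg'ne
        have h3 : ‖g‖ < δ := by rw [Metric.mem_ball, dist_zero_right] at hgball; exact hgball
        have h4 : ‖g'‖ < δ := by rw [Metric.mem_ball, dist_zero_right] at hg'ball; exact hg'ball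
        exact hkey g g' h1 h2 h3 h4
  obtain ⟨c, hc⟩ := CompleteSpace.complete hcauchy
  have hten : Filter.Tendsto (fun g => (f (a - conj b + g) - f (a - conj b)) / g)
      (𝓝[≠] (0:ℂ)) (𝓝 c) := hc
  have hmap : Filter.Tendsto (fun y : ℂ => y - (a - conj b))
      (𝓝[≠] (a - conj b)) (𝓝[≠] (0:ℂ)) := by
    rw [tendsto_nhdsWithin_iff]
    constructor
    · have h1 : Filter.Tendsto (fun y : ℂ => y - (a - conj b)) (𝓝 (a - conj b)) (𝓝 0) := by
        have hcont : Continuous (fun y : ℂ => y - (a - conj b)) := by fun_prop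
        have := hcont.tendsto (a - conj b)
        simpa using this
      exact h1.mono_left nhdsWithin_le_nhds
    · filter_upwards [self_mem_nhdsWithin] with y hy
      simp only [Set.mem_compl_iff, Set.mem_singleton_iff] at hy ⊢
      exact sub_ne_zero.mpr hy
  have hslope : HasDerivAt f c (a - conj b) := by
    rw [hasDerivAt_iff_tendsto_slope]
    have h2 := hten.comp hmap
    refine h2.congr fun y => ?_
    simp only [Function.comp_apply]
    rw [slope_def_field, show a - conj b + (y - (a - conj b)) = y from by ring]
  exact hslope.differentiableAt
end
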